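/- The closed unit interval [0,1] is a self regenerating fractal: for every nonempty open set U ⊆ [0,1] there exists a finite family F of continuous self-maps of [0,1], each constant on [0,1] \ U, such that ([0,1], F) is a topological fractal. -/

import Mathlib

open Set

/-- Composition of a list of self-maps. -/
def Comp {X : Type*} (l : List (X → X)) : X → X := l.foldr (· ∘ ·) id

/-- `F` is a topologically contracting system on `Y ⊆ X`. -/
def TopContracting {X : Type*} [TopologicalSpace X] (F : Set (X → X)) (Y : Set X) : Prop :=
  ∀ 𝒰 : Set (Set X), (∀ U ∈ 𝒰, IsOpen U) → Y ⊆ ⋃₀ 𝒰 →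
    ∃ n : ℕ, ∀ l : List (X → X), l.length = n → (∀ f ∈ l, f ∈ F) →
      ∃ U ∈ 𝒰, Comp l '' Y ⊆ U

/-- A tent function: zero off `(0, 2/3)`, rising linearly to `1` at `1/3`. -/
noncomputable def tentFn (t : ℝ) : ℝ := max (1 - |3 * t - 1|) 0

lemma tentFn_nonneg (t : ℝ) : 0 ≤ tentFn t := le_max_right _ _

lemma tentFn_le_one (t : ℝ) : tentFn t ≤ 1 := by
  have := abs_nonneg (3 * t - 1)
  apply max_le <;> linarith

lemma tentFn_dist (s t : ℝ) : |tentFn s - tentFn t| ≤ 3 * |s - t| := by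
  calc |tentFn s - tentFn t| ≤ |(1 - |3 * s - 1|) - (1 - |3 * t - 1|)| :=
        abs_max_sub_max_le_abs _ _ _
    _ = |(|3 * t - 1|) - (|3 * s - 1|)| := by rw [show (1 - |3 * s - 1|) - (1 - |3 * t - 1|)
          = |3 * t - 1| - |3 * s - 1| by ring]
    _ ≤ |(3 * t - 1) - (3 * s - 1)| := abs_abs_sub_abs_le_abs_sub _ _
    _ = 3 * |s - t| := by rw [show (3 * t - 1) - (3 * s - 1) = 3 * (t - s) by ring,
          abs_mul, abs_sub_comm]; norm_num

lemma tentFn_lipschitz : LipschitzWith 3 tentFn := by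
  apply LipschitzWith.of_dist_le_mul
  intro x y
  rw [Real.dist_eq, Real.dist_eq]
  simpa using tentFn_dist x y

lemma tentFn_zero {t : ℝ} (h : t ≤ 0 ∨ 1 ≤ t) : tentFn t = 0 := by
  have h1 : 1 ≤ |3 * t - 1| := by
    rcases h with h | h
    · rw [abs_sub_comm]; calc (1:ℝ) ≤ 1 - 3 * t := by linarith
        _ ≤ |1 - 3 * t| := le_abs_self _
    · calc (1:ℝ) ≤ 3 * t - 1 := by linarith
        _ ≤ |3 * t - 1| := le_abs_self _
  rw [tentFn, max_eq_right]; linarith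

lemma tentFn_eq {t : ℝ} (h0 : 0 ≤ t) (h1 : t ≤ 1 / 3) : tentFn t = 3 * t := by
  rw [tentFn, abs_of_nonpos (by linarith), max_eq_left (by linarith)]
  ring

open unitInterval in
theorem stmt18 :
    ∀ U : Set I, IsOpen U → U.Nonempty →
      ∃ F : Set (I → I), F.Finite ∧
        (∀ f ∈ F, Continuous f ∧ ∃ c : I, ∀ x ∈ Set.univ \ U, f x = c) ∧
        (⋃ f ∈ F, Set.range f) = Set.univ ∧ TopContracting F Set.univ := by
  intro U hU hne
  obtain ⟨x, hxU⟩ := hne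
  obtain ⟨V, hV, hUV⟩ := isOpen_induced_iff.mp hU
  have hxV : (x : ℝ) ∈ V := by
    rw [← hUV] at hxU; exact hxU
  obtain ⟨ε, hε, hball⟩ := Metric.isOpen_iff.mp hV _ hxV
  set ε' : ℝ := min (ε / 2) 1 with hε'def
  have hε'pos : 0 < ε' := lt_min (by linarith) one_pos
  have hε'lt : ε' < ε := lt_of_le_of_lt (min_le_left _ _) (by linarith)
  obtain ⟨hx0, hx1⟩ := x.2
  set a : ℝ := max 0 ((x : ℝ) - ε') with hadef
  set b : ℝ := min 1 ((x : ℝ) + ε') with hbdef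
  have ha0 : 0 ≤ a := le_max_left _ _
  have hb1 : b ≤ 1 := min_le_left _ _
  have hab : a < b := by
    apply max_lt (lt_min one_pos (by linarith)) (lt_min (by linarith) (by linarith))
  have hsub : ∀ z : I, a ≤ (z : ℝ) → (z : ℝ) ≤ b → z ∈ U := by
    intro z h1 h2
    have hza : (x : ℝ) - ε' ≤ (z : ℝ) := le_trans (le_max_right _ _) h1
    have hzb : (z : ℝ) ≤ (x : ℝ) + ε' := le_trans h2 (min_le_right _ _)
    have : (z : ℝ) ∈ Metric.ball (x : ℝ) ε := by
      rw [Metric.mem_ball, Real.dist_eq, abs_sub_lt_iff]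
      constructor <;> linarith
    rw [← hUV]; exact hball this
  set δ : ℝ := b - a with hδdef
  have hδpos : 0 < δ := by simp [hδdef]; linarith
  obtain ⟨N, hN⟩ := exists_nat_gt (3 / δ)
  have hNpos : 0 < (N : ℝ) := lt_trans (by positivity) hN
  have hN0 : 0 < N := by exact_mod_cast hNpos
  -- the real-valued maps
  set g : ℕ → ℝ → ℝ := fun k t => ((k : ℝ) + tentFn ((t - a) / δ)) / N with hgdef
  have hgmem : ∀ k : Fin N, ∀ z : I, g k (z : ℝ) ∈ Set.Icc (0 : ℝ) 1 := by
    intro k z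
    have h0 := tentFn_nonneg (((z : ℝ) - a) / δ)
    have h1 := tentFn_le_one (((z : ℝ) - a) / δ)
    have hk : (k : ℝ) + 1 ≤ N := by exact_mod_cast k.2
    have hk0 : (0 : ℝ) ≤ k := Nat.cast_nonneg _
    constructor
    · apply div_nonneg (by linarith) hNpos.le
    · rw [div_le_one hNpos]; linarith
  set f : Fin N → I → I := fun k z => ⟨g k (z : ℝ), hgmem k z⟩ with hfdef
  refine ⟨Set.range f, Set.finite_range f, ?_, ?_, ?_⟩
  · -- continuity and constancy
    rintro _ ⟨k, rfl⟩
    constructor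
    · apply Continuous.subtype_mk
      apply Continuous.div_const
      apply Continuous.add continuous_const
      exact tentFn_lipschitz.continuous.comp
        ((continuous_subtype_val.sub continuous_const).div_const _)
    · have hkN : (k : ℝ) / N ∈ Set.Icc (0 : ℝ) 1 := by
        constructor
        · positivity
        · rw [div_le_one hNpos]; exact_mod_cast (k.2).le
      refine ⟨⟨(k : ℝ) / N, hkN⟩, ?_⟩
      rintro z ⟨-, hzU⟩
      have hz : (z : ℝ) < a ∨ b < (z : ℝ) := by
        by_contra h
        push_neg at h
        exact hzU (hsub z h.1 h.2)
      have ht : tentFn (((z : ℝ) - a) / δ) = 0 := by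
        apply tentFn_zero
        rcases hz with h | h
        · exact Or.inl (div_nonpos_iff.2 (Or.inr ⟨by linarith, hδpos.le⟩))
        · right; rw [le_div_iff₀ hδpos]; simp only [hδdef]; linarith
      apply Subtype.ext
      show g k (z : ℝ) = (k : ℝ) / N
      simp only [hgdef, ht, add_zero]
  · -- the ranges cover
    apply Set.eq_univ_of_forall
    intro y
    obtain ⟨hy0, hy1⟩ := y.2
    obtain ⟨k, hk1, hk2⟩ : ∃ k : Fin N, (k : ℝ) / N ≤ (y : ℝ) ∧ (y : ℝ) ≤ ((k : ℝ) + 1) / N := by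
      by_cases h : ⌊(y : ℝ) * N⌋₊ < N
      · refine ⟨⟨⌊(y : ℝ) * N⌋₊, h⟩, ?_, ?_⟩
        · rw [div_le_iff₀ hNpos]
          exact Nat.floor_le (by positivity)
        · rw [le_div_iff₀ hNpos]
          exact_mod_cast (Nat.lt_floor_add_one ((y : ℝ) * N)).le
      · push_neg at h
        have h1 : (N : ℝ) ≤ (y : ℝ) * N := by
          calc (N : ℝ) ≤ (⌊(y : ℝ) * N⌋₊ : ℝ) := by exact_mod_cast h
            _ ≤ (y : ℝ) * N := Nat.floor_le (by positivity)
        have hy : (y : ℝ) = 1 := by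
          have h2 : (y : ℝ) * N ≤ 1 * N := by nlinarith
          nlinarith
        refine ⟨⟨N - 1, by omega⟩, ?_, ?_⟩
        · show ((N - 1 : ℕ) : ℝ) / N ≤ (y : ℝ)
          rw [hy, div_le_one hNpos]
          exact_mod_cast Nat.sub_le N 1
        · show (y : ℝ) ≤ (((N - 1 : ℕ) : ℝ) + 1) / N
          rw [hy, le_div_iff₀ hNpos, Nat.cast_sub hN0]
          ring_nf
          linarith
    have hk1' : (k : ℝ) ≤ (y : ℝ) * N := by rwa [div_le_iff₀ hNpos] at hk1
    have hk2' : (y : ℝ) * N ≤ (k : ℝ) + 1 := by rwa [le_div_iff₀ hNpos] at hk2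
    set s : ℝ := (y : ℝ) * N - (k : ℝ) with hsdef
    have hs0 : 0 ≤ s := by simp only [hsdef]; linarith
    have hs1 : s ≤ 1 := by simp only [hsdef]; linarith
    set x0 : ℝ := a + δ * (s / 3) with hx0def
    have hx0mem : x0 ∈ Set.Icc (0 : ℝ) 1 := by
      constructor
      · have : 0 ≤ δ * (s / 3) := by positivity
        simp only [hx0def]; linarith
      · have : δ * (s / 3) ≤ δ := by nlinarith
        have hb : a + δ = b := by simp [hδdef]
        simp only [hx0def]; linarith
    rw [Set.mem_iUnion₂]
    refine ⟨f k, ⟨k, rfl⟩, ⟨x0, hx0mem⟩, ?_⟩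
    apply Subtype.ext
    show g k x0 = (y : ℝ)
    have hratio : (x0 - a) / δ = s / 3 := by
      simp only [hx0def]
      field_simp
      ring
    have htent : tentFn ((x0 - a) / δ) = s := by
      rw [hratio, tentFn_eq (by linarith) (by linarith)]
      ring
    simp only [hgdef, htent, hsdef]
    field_simp
    ring
  · -- topological contraction
    intro 𝒰 h𝒰 hcov
    set K : NNReal := Real.toNNReal (3 / (δ * N)) with hKdef
    have hKcoe : (K : ℝ) = 3 / (δ * N) := Real.coe_toNNReal _ (by positivity)
    have hKlt : (K : ℝ) < 1 := by
      rw [hKcoe, div_lt_one (by positivity)]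
      rw [div_lt_iff₀ hδpos] at hN
      linarith
    have hlip : ∀ k : Fin N, LipschitzWith K (f k) := by
      intro k
      apply LipschitzWith.of_dist_le_mul
      intro z w
      rw [Subtype.dist_eq, Subtype.dist_eq, Real.dist_eq, Real.dist_eq, hKcoe]
      show |g k (z : ℝ) - g k (w : ℝ)| ≤ _
      have heq : g k (z : ℝ) - g k (w : ℝ)
          = (tentFn (((z : ℝ) - a) / δ) - tentFn (((w : ℝ) - a) / δ)) / N := by
        simp only [hgdef]; ring
      rw [heq, abs_div, abs_of_pos hNpos]
      have h3 := tentFn_dist (((z : ℝ) - a) / δ) (((w : ℝ) - a) / δ)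
      have heq2 : ((z : ℝ) - a) / δ - ((w : ℝ) - a) / δ = ((z : ℝ) - (w : ℝ)) / δ := by ring
      rw [heq2, abs_div, abs_of_pos hδpos] at h3
      have hfin : 3 / (δ * N) * |(z : ℝ) - (w : ℝ)| = (3 * (|(z : ℝ) - (w : ℝ)| / δ)) / N := by
        field_simp
      rw [hfin]
      exact (div_le_div_iff_of_pos_right hNpos).2 h3
    have hcomp : ∀ l : List (I → I), (∀ q ∈ l, q ∈ Set.range f) →
        LipschitzWith (K ^ l.length) (Comp l) := by
      intro l
      induction l with
      | nil => intro _; simpa [Comp] using LipschitzWith.id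
      | cons q l ih =>
        intro hl
        obtain ⟨k, hk⟩ := hl q List.mem_cons_self
        have h1 : Comp (q :: l) = q ∘ Comp l := rfl
        rw [h1, List.length_cons, pow_succ, mul_comm]
        exact LipschitzWith.comp (hk ▸ hlip k) (ih fun r hr => hl r (List.mem_cons_of_mem _ hr))
    obtain ⟨r, hr, hleb⟩ := lebesgue_number_lemma_of_metric_sUnion isCompact_univ h𝒰 hcov
    obtain ⟨n, hn⟩ := exists_pow_lt_of_lt_one hr hKlt
    refine ⟨n, ?_⟩
    intro l hlen hlF
    obtain ⟨t, ht, hballt⟩ := hleb (Comp l 0) (Set.mem_univ _)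
    refine ⟨t, ht, ?_⟩
    rintro _ ⟨z, -, rfl⟩
    apply hballt
    rw [Metric.mem_ball]
    have hl := hcomp l hlF
    calc dist (Comp l z) (Comp l 0) ≤ (K : ℝ) ^ n * dist z 0 := by
          have h2 := hl.dist_le_mul z 0
          rwa [hlen, NNReal.coe_pow] at h2
      _ ≤ (K : ℝ) ^ n * 1 := by
          apply mul_le_mul_of_nonneg_left ?_ (by positivity)
          rw [Subtype.dist_eq, Real.dist_eq]
          have hz0 : ((0 : I) : ℝ) = 0 := rfl
          rw [hz0, sub_zero, abs_of_nonneg z.2.1]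
          exact z.2.2
      _ = (K : ℝ) ^ n := mul_one _
      _ < r := hn
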